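/- For a shape σ = (s_1 ≥ ... ≥ s_w) and integers t, r: γ_t(σ) ≥ r holds if and only if there exists k ≥ 1 such that α_k(σ) ≥ r + k(t−1), where γ_t(σ) = Σ_i (s_i − t + 1)_+ and α_k(σ) = s_1 + ... + s_k (with s_i = 0 for i > w). -/
import Mathlib

/-- A downward-closed finset of naturals is an initial segment. -/
lemma downward_closed_eq_range (S : Finset ℕ) (h : ∀ j ∈ S, ∀ i < j, i ∈ S) :
    S = Finset.range S.card := by
  have hsub : Finset.range S.card ⊆ S := by
    intro i hi
    simp only [Finset.mem_range] at hi
    by_contra hiS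
    have hS : S ⊆ Finset.range i := by
      intro j hj
      simp only [Finset.mem_range]
      by_contra hji
      push_neg at hji
      rcases eq_or_lt_of_le hji with rfl | hlt
      · exact hiS hj
      · exact hiS (h j hj i hlt)
    have := Finset.card_le_card hS
    simp only [Finset.card_range] at this
    omega
  have := Finset.eq_of_subset_of_card_le hsub (by simp)
  exact this.symm

/-- For a shape `σ = (s_1 ≥ s_2 ≥ …)` (non-increasing, vanishing from index
`w` on) and integers `t, r ≥ 1`: `γ_t(σ) ≥ r` iff there is `k ≥ 1` with
`α_k(σ) ≥ r + k(t−1)`, where `γ_t(σ) = Σ_i (s_i − t + 1)_+` and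
`α_k(σ) = s_1 + … + s_k`. -/
theorem gamma_ge_iff_exists_alpha (w t r : ℕ) (ht : 1 ≤ t) (hr : 1 ≤ r)
    (s : ℕ → ℕ) (hmono : ∀ i j, i ≤ j → s j ≤ s i) (hw : ∀ i, w ≤ i → s i = 0) :
    r ≤ ∑ i ∈ Finset.range w, (s i + 1 - t) ↔
    ∃ k, 1 ≤ k ∧ r + k * (t - 1) ≤ ∑ i ∈ Finset.range k, s i := by
  constructor
  · intro hγ
    set S := (Finset.range w).filter (fun i => t ≤ s i) with hS
    have hdc : ∀ j ∈ S, ∀ i < j, i ∈ S := by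
      intro j hj i hij
      simp only [hS, Finset.mem_filter, Finset.mem_range] at hj ⊢
      exact ⟨lt_trans hij hj.1, le_trans hj.2 (hmono i j hij.le)⟩
    have hrange : S = Finset.range S.card := downward_closed_eq_range S hdc
    set k := S.card with hk
    refine ⟨k, ?_, ?_⟩
    · -- k ≥ 1
      by_contra hk0
      push_neg at hk0
      interval_cases k
      · have hSe : S = ∅ := Finset.card_eq_zero.mp hk.symm
        have : ∑ i ∈ Finset.range w, (s i + 1 - t) = 0 := by
          apply Finset.sum_eq_zero
          intro i hi
          have : i ∉ S := by simp [hSe]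
          simp only [hS, Finset.mem_filter, hi, true_and] at this
          omega
        omega
    · -- main inequality
      have hsum : ∑ i ∈ Finset.range w, (s i + 1 - t) = ∑ i ∈ S, (s i + 1 - t) := by
        symm
        apply Finset.sum_subset (Finset.filter_subset _ _)
        intro i hi hiS
        simp only [hS, Finset.mem_filter, hi, true_and] at hiS
        omega
      have hS_t : ∀ i ∈ S, t ≤ s i := by
        intro i hi
        simp only [hS, Finset.mem_filter] at hi
        exact hi.2
      have h2 : ∑ i ∈ Finset.range k, s i = ∑ i ∈ S, s i := by
        rw [hrange]
      have heq : ∑ i ∈ S, ((s i + 1 - t) + (t - 1)) = ∑ i ∈ S, s i :=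
        Finset.sum_congr rfl (fun i hi => by have := hS_t i hi; omega)
      rw [Finset.sum_add_distrib, Finset.sum_const, smul_eq_mul, ← hk] at heq
      rw [h2, ← heq]
      rw [hsum] at hγ
      exact Nat.add_le_add_right hγ _
  · rintro ⟨k, hk1, hk⟩
    have h1 : ∑ i ∈ Finset.range k, s i ≤
        (∑ i ∈ Finset.range k, (s i + 1 - t)) + k * (t - 1) := by
      calc ∑ i ∈ Finset.range k, s i ≤ ∑ i ∈ Finset.range k, ((s i + 1 - t) + (t - 1)) :=
            Finset.sum_le_sum (fun i _ => by omega)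
        _ = (∑ i ∈ Finset.range k, (s i + 1 - t)) + k * (t - 1) := by
            rw [Finset.sum_add_distrib, Finset.sum_const, smul_eq_mul, Finset.card_range]
    have h2 : r ≤ ∑ i ∈ Finset.range k, (s i + 1 - t) :=
      le_of_add_le_add_right (le_trans hk h1)
    have h3 : ∑ i ∈ Finset.range k, (s i + 1 - t) ≤
        ∑ i ∈ Finset.range w, (s i + 1 - t) := by
      rcases le_total k w with h | h
      · exact Finset.sum_le_sum_of_subset (Finset.range_subset_range.mpr h)
      · apply le_of_eq
        symm
        apply Finset.sum_subset (Finset.range_subset_range.mpr h)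
        intro i _ hi
        simp only [Finset.mem_range, not_lt] at hi
        have := hw i hi
        omega
    exact le_trans h2 h3
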